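/- For all positive integers n and h with h dividing both n and 24, the sums Σ_{(c,d)} |R⁺_{c,d}(τ)| and Σ_{(c,d)} |S⁺_{c,d}(τ)|, taken over all integer pairs (c,d) with c > 0, n | c and gcd(c,d) = 1, converge, and the convergence is locally uniform for τ ∈ ℍ. -/

import Mathlib

noncomputable section

open Complex Filter Topology

namespace Rademacher

attribute [local instance] Classical.propDecidable

/-- `e(x) = exp(2πix)`. -/
def ee (x : ℂ) : ℂ := Complex.exp (2 * Real.pi * Complex.I * x)

/-- The upper half-plane as a subset of `ℂ`. -/
def HH : Set ℂ := {τ : ℂ | 0 < τ.im}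

/-- The sawtooth function `((x))`. -/
def sawtooth (x : ℝ) : ℝ := if Int.fract x = 0 then 0 else Int.fract x - 1/2

/-- The Dedekind sum `s(d,c) = Σ_{m=1}^{c-1} (d/c)((md/c))` (as in the paper). -/
def dedekindS (d c : ℤ) : ℝ :=
  ∑ m ∈ Finset.Ico 1 c.toNat, ((d : ℝ) / (c : ℝ)) * sawtooth ((m : ℝ) * (d : ℝ) / (c : ℝ))

/-- The eta multiplier system `ε`, on the entries `(a,b;c,d)` of a matrix in `SL₂(ℤ)`. -/
def eps (a b c d : ℤ) : ℂ :=
  if 0 < c then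
    ee (-(((a : ℂ) + (d : ℂ)) / (24 * (c : ℂ))) + ((dedekindS d c : ℝ) : ℂ) / 2 + 1/8)
  else if c < 0 then
    ee ((1 : ℂ)/4) *
      ee (-((((-a : ℤ) : ℂ) + ((-d : ℤ) : ℂ)) / (24 * ((-c : ℤ) : ℂ)))
        + ((dedekindS (-d) (-c) : ℝ) : ℂ) / 2 + 1/8)
  else if d = 1 then ee (-(b : ℂ) / 24)
  else ee ((1 : ℂ)/4) * ee ((b : ℂ) / 24)

/-- The character `ρ_{n|h}(γ) = e(−cd/(nh))` on `Γ₀(n)`. -/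
def rho (n h : ℕ) (c d : ℤ) : ℂ := ee (-((c : ℂ) * (d : ℂ)) / ((n : ℂ) * (h : ℂ)))

/-- The multiplier `ψ = ρ_{n|h} · ε^{−3}`. -/
def psi (n h : ℕ) (a b c d : ℤ) : ℂ := rho n h c d * (eps a b c d) ^ (-3 : ℤ)

/-- Möbius action `γτ = (aτ+b)/(cτ+d)`. -/
def moeb (a b c d : ℤ) (τ : ℂ) : ℂ := ((a : ℂ) * τ + (b : ℂ)) / ((c : ℂ) * τ + (d : ℂ))

/-- `jac(γ,τ) = (cτ+d)^{−2}`. -/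
def jac (c d : ℤ) (τ : ℂ) : ℂ := ((c : ℂ) * τ + (d : ℂ)) ^ (-2 : ℤ)

/-- The generalized exponential `e(x,s) = Σ_{m≥0} (2πix)^{m+s}/Γ(m+s+1)` (principal branches). -/
def genExp (x s : ℂ) : ℂ :=
  ∑' m : ℕ, (2 * Real.pi * Complex.I * x) ^ ((m : ℂ) + s) / Complex.Gamma ((m : ℂ) + s + 1)

/-- The Rademacher regularization factor `reg(γ,τ)` of weight `1/2` and index `−1/8`. -/
def reg (a b c d : ℤ) (τ : ℂ) : ℂ :=
  if c = 0 then 1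
  else ee ((moeb a b c d τ - (a : ℂ) / (c : ℂ)) / 8) *
    genExp (((a : ℂ) / (c : ℂ) - moeb a b c d τ) / 8) (1/2)

/-- A choice of upper row `(a,b)` completing the bottom row `(c,d)` to a matrix in `SL₂(ℤ)`. -/
def ab (c d : ℤ) : ℤ × ℤ :=
  if hyp : ∃ p : ℤ × ℤ, p.1 * d - p.2 * c = 1 then hyp.choose else (1, 0)

/-- The summand of the Rademacher sum `R_{n|h}` attached to a coprime pair `(c,d)` with `c > 0`. -/
def Rterm (n h : ℕ) (c d : ℤ) (τ : ℂ) : ℂ :=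
  psi n h (ab c d).1 (ab c d).2 c d * ee (-(moeb (ab c d).1 (ab c d).2 c d τ) / 8) *
    reg (ab c d).1 (ab c d).2 c d τ * (jac c d τ) ^ ((1 : ℂ)/4)

/-- The summand of the Rademacher sum `S_{n|h}` attached to a coprime pair `(c,d)` with `c > 0`. -/
def Sterm (n h : ℕ) (c d : ℤ) (τ : ℂ) : ℂ :=
  (psi n h (ab c d).1 (ab c d).2 c d)⁻¹ * ee ((moeb (ab c d).1 (ab c d).2 c d τ) / 8) *
    (jac c d τ) ^ ((3 : ℂ)/4)

/-- The "rectangle" of pairs `(c,d)` with `0 < c < K`, `n | c`, `−K² < d < K²`, `gcd(c,d) = 1`. -/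
def pairs (n K : ℕ) : Finset (ℤ × ℤ) :=
  ((Finset.Ioo (0 : ℤ) (K : ℤ)) ×ˢ (Finset.Ioo (-(K : ℤ)^2) ((K : ℤ)^2))).filter
    (fun p => p.1 % (n : ℤ) = 0 ∧ Int.gcd p.1 p.2 = 1)

/-- The partial Rademacher sum `R^{<K}_{n|h}(τ)`. -/
def Rpart (n h K : ℕ) (τ : ℂ) : ℂ := ee (-τ/8) + ∑ p ∈ pairs n K, Rterm n h p.1 p.2 τ

/-- The partial Rademacher sum `S^{<K}_{n|h}(τ)`. -/
def Spart (n h K : ℕ) (τ : ℂ) : ℂ := ee (τ/8) + ∑ p ∈ pairs n K, Sterm n h p.1 p.2 τ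

/-- The Dedekind eta function. -/
def eta (τ : ℂ) : ℂ := ee (τ/24) * ∏' m : ℕ, (1 - ee τ ^ (m + 1))

end Rademacher

namespace Rademacher

/-- The function `R⁺_{c,d}(τ)` of the paper. -/
def Rplus (n h : ℕ) (c d : ℤ) (τ : ℂ) : ℂ :=
  psi n h (ab c d).1 (ab c d).2 c d * ee (-((ab c d).1 : ℂ) / (8 * (c : ℂ))) *
    ∑' m : ℕ, (c : ℂ) ^ (-2 * ((m : ℂ) + 1) - 3/2) * (τ + (d : ℂ) / (c : ℂ)) ^ (-(m : ℤ) - 2) *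
      (2 * Real.pi * Complex.I / 8) ^ ((m : ℂ) + 3/2) / Complex.Gamma ((m : ℂ) + 1 + 3/2)

/-- The function `S⁺_{c,d}(τ)` of the paper. -/
def Splus (n h : ℕ) (c d : ℤ) (τ : ℂ) : ℂ :=
  (psi n h (ab c d).1 (ab c d).2 c d)⁻¹ * ee (((ab c d).1 : ℂ) / (8 * (c : ℂ))) *
    ∑' m : ℕ, (c : ℂ) ^ (-2 * ((m : ℂ) + 1) - 3/2) *
      (τ + (d : ℂ) / (c : ℂ)) ^ (-((m : ℂ) + 1) - 3/2) *
      (-(2 * Real.pi * Complex.I) / 8) ^ (m + 1) / ((m + 1).factorial : ℂ)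

/-- `‖R⁺_{c,d}(τ)‖` extended by zero outside the admissible pairs `(c,d)`:
`c > 0`, `n ∣ c`, `gcd(c,d) = 1`. -/
def RplusAbs (n h : ℕ) (p : ℤ × ℤ) (τ : ℂ) : ℝ :=
  if 0 < p.1 ∧ (n : ℤ) ∣ p.1 ∧ Int.gcd p.1 p.2 = 1 then ‖Rplus n h p.1 p.2 τ‖ else 0

/-- `‖S⁺_{c,d}(τ)‖` extended by zero outside the admissible pairs `(c,d)`. -/
def SplusAbs (n h : ℕ) (p : ℤ × ℤ) (τ : ℂ) : ℝ :=
  if 0 < p.1 ∧ (n : ℤ) ∣ p.1 ∧ Int.gcd p.1 p.2 = 1 then ‖Splus n h p.1 p.2 τ‖ else 0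


lemma ee_ne_zero (z : ℂ) : ee z ≠ 0 := Complex.exp_ne_zero _

lemma norm_ee_of_im_eq_zero {z : ℂ} (hz : z.im = 0) : ‖ee z‖ = 1 := by
  rw [ee, Complex.norm_exp]
  have : (2 * (Real.pi:ℂ) * Complex.I * z).re = -(2 * Real.pi * z.im) := by
    simp [Complex.mul_re, Complex.mul_im]
  rw [this, hz]
  simp

lemma norm_psi (n h : ℕ) (a b : ℤ) {c : ℤ} (d : ℤ) (hc : 0 < c) : ‖psi n h a b c d‖ = 1 := by
  have h1 : ‖rho n h c d‖ = 1 := by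
    apply norm_ee_of_im_eq_zero
    have : -((c:ℂ)*(d:ℂ))/((n:ℂ)*(h:ℂ)) = (((-(c*d:ℤ):ℝ)/((n*h:ℕ):ℝ) : ℝ) : ℂ) := by
      push_cast; ring
    rw [this]; exact Complex.ofReal_im _
  have h2 : ‖eps a b c d‖ = 1 := by
    rw [eps, if_pos hc]
    apply norm_ee_of_im_eq_zero
    have : -(((a:ℂ) + (d:ℂ)) / (24 * (c:ℂ))) + ((dedekindS d c : ℝ) : ℂ) / 2 + 1/8
        = (((-(((a:ℝ) + d) / (24 * c)) + dedekindS d c / 2 + 1/8 : ℝ)) : ℂ) := by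
      push_cast; ring
    rw [this]; exact Complex.ofReal_im _
  rw [psi, norm_mul, norm_zpow, h1, h2]; norm_num


lemma gamma_five_half : Real.Gamma (5/2) = 3/4 * Real.sqrt Real.pi := by
  have h1 : (5/2 : ℝ) = 3/2 + 1 := by norm_num
  rw [h1, Real.Gamma_add_one (by norm_num)]
  have h2 : (3/2 : ℝ) = 1/2 + 1 := by norm_num
  rw [h2, Real.Gamma_add_one (by norm_num), Real.Gamma_one_half_eq]
  ring

lemma one_le_gamma_five_half : (1:ℝ) ≤ Real.Gamma (5/2) := by
  rw [gamma_five_half]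
  have : Real.sqrt (16/9) ≤ Real.sqrt Real.pi :=
    Real.sqrt_le_sqrt (by nlinarith [Real.pi_gt_three])
  have h169 : Real.sqrt (16/9 : ℝ) = 4/3 := by
    rw [show (16/9 : ℝ) = (4/3)^2 by norm_num, Real.sqrt_sq (by norm_num)]
  nlinarith

lemma factorial_le_gamma (m : ℕ) : (m.factorial : ℝ) ≤ Real.Gamma ((m:ℝ) + 5/2) := by
  induction m with
  | zero => simpa using one_le_gamma_five_half
  | succ k ih =>
    have h : ((k:ℝ) + 1) + 5/2 = ((k:ℝ) + 5/2) + 1 := by ring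
    rw [Nat.factorial_succ]
    push_cast
    rw [h, Real.Gamma_add_one (by positivity)]
    have hg : (0:ℝ) < Real.Gamma ((k:ℝ) + 5/2) := Real.Gamma_pos_of_pos (by positivity)
    have : ((k:ℝ) + 1) * (k.factorial : ℝ) ≤ ((k:ℝ) + 1) * Real.Gamma ((k:ℝ) + 5/2) := by
      apply mul_le_mul_of_nonneg_left ih (by positivity)
    nlinarith


lemma Rterm_norm_le {c : ℤ} (hc : 0 < c) {z : ℂ} {Y : ℝ} (hY : 0 < Y)
    (hR : Y ≤ ‖z‖) (m : ℕ) :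
    ‖(c : ℂ) ^ (-2 * ((m : ℂ) + 1) - 3/2) * z ^ (-(m : ℤ) - 2) *
      (2 * (Real.pi:ℂ) * Complex.I / 8) ^ ((m : ℂ) + 3/2) / Complex.Gamma ((m : ℂ) + 1 + 3/2)‖
    ≤ ((c:ℝ) ^ (-(7/2) : ℝ) * ((‖z‖)⁻¹)^2 * (Real.pi/4) ^ ((3/2) : ℝ)) *
      ((Real.pi/(4*Y))^m / m.factorial) := by
  have hc0 : (0:ℝ) < (c:ℝ) := by exact_mod_cast hc
  have hc1 : (1:ℝ) ≤ (c:ℝ) := by exact_mod_cast hc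
  have hR0 : (0:ℝ) < ‖z‖ := lt_of_lt_of_le hY hR
  have hpi4 : (0:ℝ) < Real.pi/4 := by positivity
  -- factor 1
  have h1 : ‖(c : ℂ) ^ (-2 * ((m : ℂ) + 1) - 3/2)‖
      = (c:ℝ) ^ (-(7/2) : ℝ) * ((c:ℝ) ^ (-(2):ℝ))^m := by
    have he : (-2 * ((m : ℂ) + 1) - 3/2 : ℂ) = (((-(7/2) + (-2)*(m:ℝ)) : ℝ) : ℂ) := by
      push_cast; ring
    have hcc : ((c:ℤ):ℂ) = (((c:ℝ)):ℂ) := by push_cast; rfl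
    rw [hcc, he, Complex.norm_cpow_eq_rpow_re_of_pos hc0, Complex.ofReal_re,
      Real.rpow_add hc0, ← Real.rpow_natCast ((c:ℝ) ^ (-(2):ℝ)) m, ← Real.rpow_mul hc0.le]
  -- factor 2
  have h2 : ‖z ^ (-(m : ℤ) - 2)‖ = ((‖z‖)⁻¹)^m * ((‖z‖)⁻¹)^2 := by
    rw [norm_zpow, show (-(m : ℤ) - 2) = -((m+2 : ℕ) : ℤ) by push_cast; ring,
      zpow_neg, zpow_natCast, ← inv_pow, pow_add]
  -- factor 3
  have h3 : ‖(2 * (Real.pi:ℂ) * Complex.I / 8) ^ ((m : ℂ) + 3/2)‖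
      = (Real.pi/4) ^ ((3/2) : ℝ) * (Real.pi/4)^m := by
    have he : ((m : ℂ) + 3/2 : ℂ) = ((((m:ℝ) + 3/2) : ℝ) : ℂ) := by push_cast; ring
    have hb : ‖2 * (Real.pi:ℂ) * Complex.I / 8‖ = Real.pi/4 := by
      have : (2 * (Real.pi:ℂ) * Complex.I / 8) = ((Real.pi/4 : ℝ) : ℂ) * Complex.I := by
        push_cast; ring
      rw [this, norm_mul, Complex.norm_I, Complex.norm_real, Real.norm_eq_abs, mul_one,
        abs_of_pos (by positivity)]
    rw [he, Complex.norm_cpow_real, hb, show ((m:ℝ) + 3/2) = (3/2 : ℝ) + (m:ℝ) by ring,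
      Real.rpow_add hpi4, Real.rpow_natCast]
  -- factor 4
  have h4 : ‖Complex.Gamma ((m : ℂ) + 1 + 3/2)‖ = Real.Gamma ((m:ℝ) + 5/2) := by
    have he : ((m : ℂ) + 1 + 3/2 : ℂ) = ((((m:ℝ) + 5/2) : ℝ) : ℂ) := by push_cast; ring
    rw [he, Complex.Gamma_ofReal, Complex.norm_real, Real.norm_eq_abs,
      abs_of_pos (Real.Gamma_pos_of_pos (by positivity))]
  rw [norm_div, norm_mul, norm_mul]
  rw [h1, h2, h3, h4]
  have hGam : (m.factorial : ℝ) ≤ Real.Gamma ((m:ℝ) + 5/2) := factorial_le_gamma m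
  have hfac0 : (0:ℝ) < (m.factorial : ℝ) := by exact_mod_cast m.factorial_pos
  calc ((c:ℝ) ^ (-(7/2) : ℝ) * ((c:ℝ) ^ (-(2):ℝ))^m) *
        (((‖z‖)⁻¹)^m * ((‖z‖)⁻¹)^2) *
        ((Real.pi/4) ^ ((3/2) : ℝ) * (Real.pi/4)^m) / Real.Gamma ((m:ℝ) + 5/2)
      = ((c:ℝ) ^ (-(7/2) : ℝ) * ((‖z‖)⁻¹)^2 * (Real.pi/4) ^ ((3/2) : ℝ)) *
        (((c:ℝ) ^ (-(2):ℝ))^m * (((‖z‖)⁻¹)^m * (Real.pi/4)^m) /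
          Real.Gamma ((m:ℝ) + 5/2)) := by ring
    _ ≤ ((c:ℝ) ^ (-(7/2) : ℝ) * ((‖z‖)⁻¹)^2 * (Real.pi/4) ^ ((3/2) : ℝ)) *
        (1 * ((Y⁻¹)^m * (Real.pi/4)^m) / (m.factorial : ℝ)) := by
      apply mul_le_mul_of_nonneg_left _ (by positivity)
      apply div_le_div₀ (by positivity) _ hfac0 hGam
      apply mul_le_mul _ _ (by positivity) (by norm_num)
      · exact pow_le_one₀ (by positivity) (Real.rpow_le_one_of_one_le_of_nonpos hc1 (by norm_num))
      · apply mul_le_mul_of_nonneg_right _ (by positivity)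
        exact pow_le_pow_left₀ (by positivity) (inv_anti₀ hY hR) m
    _ = ((c:ℝ) ^ (-(7/2) : ℝ) * ((‖z‖)⁻¹)^2 * (Real.pi/4) ^ ((3/2) : ℝ)) *
        ((Real.pi/(4*Y))^m / m.factorial) := by
      rw [← mul_pow, show Y⁻¹ * (Real.pi/4) = Real.pi/(4*Y) by field_simp]
      ring


lemma Sterm_norm_le {c : ℤ} (hc : 0 < c) {z : ℂ} {Y : ℝ} (hY : 0 < Y)
    (hR : Y ≤ ‖z‖) (m : ℕ) :
    ‖(c : ℂ) ^ (-2 * ((m : ℂ) + 1) - 3/2) * z ^ (-((m : ℂ) + 1) - 3/2) *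
      (-(2 * (Real.pi:ℂ) * Complex.I) / 8) ^ (m + 1) / ((m + 1).factorial : ℂ)‖
    ≤ ((c:ℝ) ^ (-(7/2) : ℝ) * ((‖z‖)⁻¹)^2 * Y ^ ((1/2) : ℝ)) *
      ((Real.pi/(4*Y))^(m+1) / (m + 1).factorial) := by
  have hc0 : (0:ℝ) < (c:ℝ) := by exact_mod_cast hc
  have hc1 : (1:ℝ) ≤ (c:ℝ) := by exact_mod_cast hc
  have hR0 : (0:ℝ) < ‖z‖ := lt_of_lt_of_le hY hR
  have hpi4 : (0:ℝ) < Real.pi/4 := by positivity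
  have h1 : ‖(c : ℂ) ^ (-2 * ((m : ℂ) + 1) - 3/2)‖
      = (c:ℝ) ^ (-(7/2) : ℝ) * ((c:ℝ) ^ (-(2):ℝ))^m := by
    have he : (-2 * ((m : ℂ) + 1) - 3/2 : ℂ) = (((-(7/2) + (-2)*(m:ℝ)) : ℝ) : ℂ) := by
      push_cast; ring
    have hcc : ((c:ℤ):ℂ) = (((c:ℝ)):ℂ) := by push_cast; rfl
    rw [hcc, he, Complex.norm_cpow_eq_rpow_re_of_pos hc0, Complex.ofReal_re,
      Real.rpow_add hc0, ← Real.rpow_natCast ((c:ℝ) ^ (-(2):ℝ)) m, ← Real.rpow_mul hc0.le]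
  set R := ‖z‖ with hRdef
  have hRtwo : R ^ (-(2):ℝ) = (R⁻¹)^2 := by
    rw [Real.rpow_neg hR0.le, show ((2:ℝ)) = ((2:ℕ):ℝ) by norm_num, Real.rpow_natCast, inv_pow]
  have h2 : ‖z ^ (-((m : ℂ) + 1) - 3/2)‖
      = (R⁻¹)^m * ((R⁻¹)^2 * R ^ (-(1/2) : ℝ)) := by
    have he : (-((m : ℂ) + 1) - 3/2 : ℂ) = ((((m:ℝ) * (-1) + (-(2) + -(1/2))) : ℝ) : ℂ) := by
      push_cast; ring
    rw [he, Complex.norm_cpow_real, Real.rpow_add hR0, Real.rpow_natCast_mul hR0.le,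
      Real.rpow_neg_one, inv_pow, Real.rpow_add hR0, hRtwo]
  have h3 : ‖(-(2 * (Real.pi:ℂ) * Complex.I) / 8) ^ (m + 1)‖
      = (Real.pi/4)^(m+1) := by
    rw [norm_pow]
    congr 1
    have : (-(2 * (Real.pi:ℂ) * Complex.I) / 8) = ((-(Real.pi/4) : ℝ) : ℂ) * Complex.I := by
      push_cast; ring
    rw [this, norm_mul, Complex.norm_I, Complex.norm_real, Real.norm_eq_abs, mul_one, abs_neg,
      abs_of_pos (by positivity)]
  have h4 : ‖((m + 1).factorial : ℂ)‖ = ((m+1).factorial : ℝ) := by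
    rw [Complex.norm_natCast]
  rw [norm_div, norm_mul, norm_mul]
  rw [h1, h2, h3, h4]
  have hfac0 : (0:ℝ) < ((m+1).factorial : ℝ) := by exact_mod_cast (m+1).factorial_pos
  have hYhalf : Y ^ ((1/2):ℝ) * Y⁻¹ = Y ^ (-(1/2):ℝ) := by
    rw [← Real.rpow_neg_one Y, ← Real.rpow_add hY]; norm_num
  calc ((c:ℝ) ^ (-(7/2) : ℝ) * ((c:ℝ) ^ (-(2):ℝ))^m) *
        ((R⁻¹)^m * ((R⁻¹)^2 * R ^ (-(1/2) : ℝ))) * (Real.pi/4)^(m+1) / ((m+1).factorial : ℝ)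
      = ((c:ℝ) ^ (-(7/2) : ℝ) * (R⁻¹)^2) *
        (((c:ℝ) ^ (-(2):ℝ))^m * (((R⁻¹)^m * R ^ (-(1/2) : ℝ)) * (Real.pi/4)^(m+1)) /
          ((m+1).factorial : ℝ)) := by ring
    _ ≤ ((c:ℝ) ^ (-(7/2) : ℝ) * (R⁻¹)^2) *
        (1 * (((Y⁻¹)^m * Y ^ (-(1/2) : ℝ)) * (Real.pi/4)^(m+1)) / ((m+1).factorial : ℝ)) := by
      apply mul_le_mul_of_nonneg_left _ (by positivity)
      apply div_le_div₀ (by positivity) _ hfac0 le_rfl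
      apply mul_le_mul _ _ (by positivity) (by norm_num)
      · exact pow_le_one₀ (by positivity) (Real.rpow_le_one_of_one_le_of_nonpos hc1 (by norm_num))
      · apply mul_le_mul_of_nonneg_right _ (by positivity)
        apply mul_le_mul
        · exact pow_le_pow_left₀ (by positivity) (inv_anti₀ hY hR) m
        · exact Real.rpow_le_rpow_of_nonpos hY hR (by norm_num)
        · positivity
        · positivity
    _ = ((c:ℝ) ^ (-(7/2) : ℝ) * (R⁻¹)^2 * Y ^ ((1/2) : ℝ)) *
        ((Real.pi/(4*Y))^(m+1) / ((m+1).factorial : ℝ)) := by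
      have key' : (Y⁻¹)^m * Y ^ (-(1/2):ℝ) * (Real.pi/4)^(m+1)
          = Y ^ ((1/2):ℝ) * (Real.pi/(4*Y))^(m+1) := by
        rw [show (Real.pi/(4*Y)) = Y⁻¹ * (Real.pi/4) by field_simp, mul_pow,
          pow_succ (Y⁻¹) m, ← hYhalf]
        ring
      rw [key']
      ring


def mA (c : ℤ) : ℝ := if 0 < c then |(c:ℝ)| ^ (-(2:ℝ)) else 0
def mB (d : ℤ) : ℝ := |(d:ℝ)| ^ (-(3/2:ℝ)) + (if d = 0 then 1 else 0)

lemma mA_nonneg (c : ℤ) : 0 ≤ mA c := by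
  rw [mA]; split <;> positivity

lemma mB_nonneg (d : ℤ) : 0 ≤ mB d := by
  rw [mB]; split <;> positivity

lemma summable_mA : Summable mA := by
  apply Summable.of_nonneg_of_le mA_nonneg (fun c => ?_)
    (Real.summable_abs_int_rpow (by norm_num : (1:ℝ) < 2))
  rw [mA]; split
  · exact le_of_eq (by norm_num)
  · positivity

lemma summable_mB : Summable mB := by
  apply Summable.add (Real.summable_abs_int_rpow (by norm_num : (1:ℝ) < 3/2))
  apply summable_of_ne_finset_zero (s := {(0:ℤ)})
  intro d hd
  simp only [Finset.mem_singleton] at hd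
  simp [hd]

lemma inv_sq_rpow {R : ℝ} (hR : 0 < R) : (R⁻¹)^2 = R ^ (-(2):ℝ) := by
  rw [Real.rpow_neg hR.le, show ((2:ℝ)) = ((2:ℕ):ℝ) by norm_num, Real.rpow_natCast, inv_pow]

lemma base_bound {c d : ℤ} (hc : 0 < c) {R Y X : ℝ} (hY : 0 < Y) (hX : 0 ≤ X)
    (hR : Y ≤ R) (hd : |(d:ℝ)| / (c:ℝ) ≤ R + X) :
    (c:ℝ) ^ (-(7/2):ℝ) * (R⁻¹)^2
      ≤ (Y^(-(2):ℝ) + Y^(-(1/2):ℝ) * (1 + X/Y)^((3/2):ℝ)) * (mA c * mB d) := by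
  have hc0 : (0:ℝ) < (c:ℝ) := by exact_mod_cast hc
  have hc1 : (1:ℝ) ≤ (c:ℝ) := by exact_mod_cast hc
  have hR0 : (0:ℝ) < R := lt_of_lt_of_le hY hR
  set Q : ℝ := 1 + X/Y with hQdef
  have hQ0 : (0:ℝ) < Q := by positivity
  have hmA : mA c = (c:ℝ) ^ (-(2):ℝ) := by rw [mA, if_pos hc, abs_of_pos hc0]
  have hJ : 0 ≤ Y^(-(1/2):ℝ) * Q^((3/2):ℝ) := by positivity
  have hY2 : 0 ≤ Y^(-(2):ℝ) := by positivity
  by_cases hd0 : d = 0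
  · subst hd0
    have hmB : mB 0 = 1 := by
      rw [mB]; norm_num
    have h1 : (c:ℝ) ^ (-(7/2):ℝ) ≤ (c:ℝ) ^ (-(2):ℝ) :=
      Real.rpow_le_rpow_of_exponent_le hc1 (by norm_num)
    have h2 : (R⁻¹)^2 ≤ Y^(-(2):ℝ) := by
      rw [inv_sq_rpow hR0]
      exact Real.rpow_le_rpow_of_nonpos hY hR (by norm_num)
    have h3 : (c:ℝ) ^ (-(7/2):ℝ) * (R⁻¹)^2 ≤ (c:ℝ) ^ (-(2):ℝ) * Y^(-(2):ℝ) :=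
      mul_le_mul h1 h2 (by positivity) (by positivity)
    rw [hmA, hmB, mul_one]
    have hcpos : 0 ≤ (c:ℝ) ^ (-(2):ℝ) := by positivity
    nlinarith [mul_nonneg hJ hcpos]
  · have hd1 : (1:ℝ) ≤ |(d:ℝ)| := by
      rw [← Int.cast_abs]
      exact_mod_cast Int.one_le_abs (by simpa using hd0)
    have hdpos : (0:ℝ) < |(d:ℝ)| := lt_of_lt_of_le one_pos hd1
    have hRd : |(d:ℝ)| / ((c:ℝ) * Q) ≤ R := by
      rw [div_le_iff₀ (by positivity)]
      rw [div_le_iff₀ hc0] at hd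
      have hXR : X ≤ (X/Y) * R := by
        have h := mul_le_mul_of_nonneg_left hR (div_nonneg hX hY.le)
        calc X = (X/Y) * Y := by field_simp
          _ ≤ (X/Y) * R := h
      calc |(d:ℝ)| ≤ (R + X) * (c:ℝ) := hd
        _ ≤ (R + (X/Y)*R) * (c:ℝ) := by nlinarith
        _ = R * ((c:ℝ) * Q) := by rw [hQdef]; ring
    have hR12 : R ^ (-(1/2):ℝ) ≤ Y ^ (-(1/2):ℝ) :=
      Real.rpow_le_rpow_of_nonpos hY hR (by norm_num)
    have hR32 : R ^ (-(3/2):ℝ) ≤ (c:ℝ)^((3/2):ℝ) * Q^((3/2):ℝ) * |(d:ℝ)|^(-(3/2):ℝ) := by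
      have h1 : R ^ (-(3/2):ℝ) ≤ (|(d:ℝ)| / ((c:ℝ) * Q)) ^ (-(3/2):ℝ) :=
        Real.rpow_le_rpow_of_nonpos (by positivity) hRd (by norm_num)
      have h2 : (|(d:ℝ)| / ((c:ℝ) * Q)) ^ (-(3/2):ℝ)
          = (c:ℝ)^((3/2):ℝ) * Q^((3/2):ℝ) * |(d:ℝ)|^(-(3/2):ℝ) := by
        rw [Real.rpow_neg (by positivity), Real.div_rpow (abs_nonneg _) (by positivity),
          Real.mul_rpow hc0.le hQ0.le, Real.rpow_neg (abs_nonneg _), inv_div,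
          div_eq_mul_inv]
      rw [h2] at h1; exact h1
    have hsplit : (R⁻¹)^2 = R ^ (-(1/2):ℝ) * R ^ (-(3/2):ℝ) := by
      rw [inv_sq_rpow hR0, ← Real.rpow_add hR0]; norm_num
    have hc2 : (c:ℝ)^(-(7/2):ℝ) * (c:ℝ)^((3/2):ℝ) = (c:ℝ)^(-(2):ℝ) := by
      rw [← Real.rpow_add hc0]; norm_num
    have hmB : mB d = |(d:ℝ)|^(-(3/2):ℝ) := by rw [mB, if_neg hd0, add_zero]
    calc (c:ℝ) ^ (-(7/2):ℝ) * (R⁻¹)^2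
        = (c:ℝ) ^ (-(7/2):ℝ) * (R ^ (-(1/2):ℝ) * R ^ (-(3/2):ℝ)) := by rw [hsplit]
      _ ≤ (c:ℝ) ^ (-(7/2):ℝ) *
          (Y ^ (-(1/2):ℝ) * ((c:ℝ)^((3/2):ℝ) * Q^((3/2):ℝ) * |(d:ℝ)|^(-(3/2):ℝ))) := by
        apply mul_le_mul_of_nonneg_left _ (by positivity)
        exact mul_le_mul hR12 hR32 (by positivity) (by positivity)
      _ = (Y^(-(1/2):ℝ) * Q^((3/2):ℝ)) * (((c:ℝ)^(-(7/2):ℝ) * (c:ℝ)^((3/2):ℝ)) *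
            |(d:ℝ)|^(-(3/2):ℝ)) := by ring
      _ = (Y^(-(1/2):ℝ) * Q^((3/2):ℝ)) * ((c:ℝ)^(-(2):ℝ) * |(d:ℝ)|^(-(3/2):ℝ)) := by
        rw [hc2]
      _ ≤ (Y^(-(2):ℝ) + Y^(-(1/2):ℝ) * Q^((3/2):ℝ)) * (mA c * mB d) := by
        rw [hmA, hmB]
        apply mul_le_mul_of_nonneg_right (le_add_of_nonneg_left hY2) (by positivity)

/-- The `m`-sum constant for the `R⁺` bound. -/
def EE (Y : ℝ) : ℝ := ∑' m : ℕ, (Real.pi/(4*Y))^m / m.factorial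

/-- The `m`-sum constant for the `S⁺` bound. -/
def EE' (Y : ℝ) : ℝ := ∑' m : ℕ, (Real.pi/(4*Y))^(m+1) / (m+1).factorial

/-- The global constant in the uniform bound. -/
def CC (Y X : ℝ) : ℝ :=
  ((Real.pi/4) ^ ((3/2):ℝ) * EE Y + Y ^ ((1/2):ℝ) * EE' Y) *
    (Y^(-(2):ℝ) + Y^(-(1/2):ℝ) * (1 + X/Y)^((3/2):ℝ))

lemma summable_EE (Y : ℝ) : Summable (fun m : ℕ => (Real.pi/(4*Y))^m / m.factorial) :=
  Real.summable_pow_div_factorial _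

lemma summable_EE' (Y : ℝ) :
    Summable (fun m : ℕ => (Real.pi/(4*Y))^(m+1) / (m+1).factorial) := by
  have := (Real.summable_pow_div_factorial (Real.pi/(4*Y))).comp_injective Nat.succ_injective
  exact this

lemma EE_nonneg {Y : ℝ} (hY : 0 < Y) : 0 ≤ EE Y :=
  tsum_nonneg (fun m => by positivity)

lemma EE'_nonneg {Y : ℝ} (hY : 0 < Y) : 0 ≤ EE' Y :=
  tsum_nonneg (fun m => by positivity)

lemma CC_nonneg {Y X : ℝ} (hY : 0 < Y) (hX : 0 ≤ X) : 0 ≤ CC Y X := by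
  have h1 := EE_nonneg hY
  have h2 := EE'_nonneg hY
  unfold CC
  positivity

lemma Rplus_norm_le (n h : ℕ) {c d : ℤ} (hc : 0 < c) {τ : ℂ} {Y X : ℝ} (hY : 0 < Y)
    (hX : 0 ≤ X) (him : Y ≤ τ.im) (hτ : ‖τ‖ ≤ X) :
    ‖Rplus n h c d τ‖ ≤ CC Y X * (mA c * mB d) := by
  have hc0 : (0:ℝ) < (c:ℝ) := by exact_mod_cast hc
  set z : ℂ := τ + (d:ℂ)/(c:ℂ) with hzdef
  have hdc : ((d:ℂ)/(c:ℂ)) = (((d:ℝ)/(c:ℝ) : ℝ) : ℂ) := by push_cast; rfl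
  have hzim : z.im = τ.im := by
    rw [hzdef, Complex.add_im, hdc, Complex.ofReal_im, add_zero]
  have hRz : Y ≤ ‖z‖ := by
    calc Y ≤ τ.im := him
      _ = z.im := hzim.symm
      _ ≤ |z.im| := le_abs_self _
      _ ≤ ‖z‖ := Complex.abs_im_le_norm z
  have hRz0 : (0:ℝ) < ‖z‖ := lt_of_lt_of_le hY hRz
  have habs_dc : ‖(d:ℂ)/(c:ℂ)‖ = |(d:ℝ)| / (c:ℝ) := by
    rw [norm_div, Complex.norm_intCast, Complex.norm_intCast, abs_of_pos hc0]
  have hd : |(d:ℝ)| / (c:ℝ) ≤ ‖z‖ + X := by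
    have hzt : ((d:ℂ)/(c:ℂ)) = z - τ := by rw [hzdef]; ring
    rw [← habs_dc, hzt]
    calc ‖z - τ‖ ≤ ‖z‖ + ‖τ‖ := by
          exact norm_sub_le z τ
      _ ≤ ‖z‖ + X := by
          have : ‖τ‖ ≤ X := hτ
          linarith
  have hbase := base_bound hc hY hX hRz hd
  rw [Rplus, norm_mul, norm_mul, norm_psi n h _ _ _ hc]
  rw [norm_ee_of_im_eq_zero (z := -((ab c d).1 : ℂ) / (8 * (c : ℂ)))
    (by rw [show -((ab c d).1 : ℂ) / (8 * (c : ℂ))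
          = (((-((ab c d).1 : ℝ) / (8 * (c:ℝ))) : ℝ) : ℂ) by push_cast; ring]
        exact Complex.ofReal_im _), one_mul, one_mul]
  have hb : ∀ m : ℕ,
      ‖(c : ℂ) ^ (-2 * ((m : ℂ) + 1) - 3/2) * (τ + (d : ℂ) / (c : ℂ)) ^ (-(m : ℤ) - 2) *
        (2 * (Real.pi:ℂ) * Complex.I / 8) ^ ((m : ℂ) + 3/2) / Complex.Gamma ((m : ℂ) + 1 + 3/2)‖
      ≤ (((c:ℝ) ^ (-(7/2) : ℝ) * ((‖z‖)⁻¹)^2 * (Real.pi/4) ^ ((3/2) : ℝ))) *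
        ((Real.pi/(4*Y))^m / m.factorial) :=
    fun m => Rterm_norm_le hc hY hRz m
  have hsum_maj : Summable (fun m : ℕ =>
      (((c:ℝ) ^ (-(7/2) : ℝ) * ((‖z‖)⁻¹)^2 * (Real.pi/4) ^ ((3/2) : ℝ))) *
        ((Real.pi/(4*Y))^m / m.factorial)) := (summable_EE Y).mul_left _
  have hnorm : Summable (fun m : ℕ =>
      ‖(c : ℂ) ^ (-2 * ((m : ℂ) + 1) - 3/2) * (τ + (d : ℂ) / (c : ℂ)) ^ (-(m : ℤ) - 2) *
        (2 * (Real.pi:ℂ) * Complex.I / 8) ^ ((m : ℂ) + 3/2) /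
          Complex.Gamma ((m : ℂ) + 1 + 3/2)‖) :=
    Summable.of_nonneg_of_le (fun m => norm_nonneg _) hb hsum_maj
  have ht1 : (0:ℝ) ≤ (Real.pi/4) ^ ((3/2) : ℝ) * EE Y := by
    have := EE_nonneg hY; positivity
  have ht2 : (0:ℝ) ≤ Y ^ ((1/2):ℝ) * EE' Y := by
    have := EE'_nonneg hY; positivity
  have hmm : (0:ℝ) ≤ mA c * mB d := mul_nonneg (mA_nonneg _) (mB_nonneg _)
  have hBpos : (0:ℝ) ≤ Y^(-(2):ℝ) + Y^(-(1/2):ℝ) * (1 + X/Y)^((3/2):ℝ) := by positivity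
  calc ‖∑' m : ℕ, (c : ℂ) ^ (-2 * ((m : ℂ) + 1) - 3/2) *
          (τ + (d : ℂ) / (c : ℂ)) ^ (-(m : ℤ) - 2) *
          (2 * (Real.pi:ℂ) * Complex.I / 8) ^ ((m : ℂ) + 3/2) /
            Complex.Gamma ((m : ℂ) + 1 + 3/2)‖
      ≤ ∑' m : ℕ, ‖(c : ℂ) ^ (-2 * ((m : ℂ) + 1) - 3/2) *
          (τ + (d : ℂ) / (c : ℂ)) ^ (-(m : ℤ) - 2) *
          (2 * (Real.pi:ℂ) * Complex.I / 8) ^ ((m : ℂ) + 3/2) /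
            Complex.Gamma ((m : ℂ) + 1 + 3/2)‖ := norm_tsum_le_tsum_norm hnorm
    _ ≤ ∑' m : ℕ, (((c:ℝ) ^ (-(7/2) : ℝ) * ((‖z‖)⁻¹)^2 *
          (Real.pi/4) ^ ((3/2) : ℝ))) * ((Real.pi/(4*Y))^m / m.factorial) :=
        Summable.tsum_le_tsum hb hnorm hsum_maj
    _ = (((c:ℝ) ^ (-(7/2) : ℝ) * ((‖z‖)⁻¹)^2 * (Real.pi/4) ^ ((3/2) : ℝ))) *
          EE Y := tsum_mul_left
    _ = ((Real.pi/4) ^ ((3/2) : ℝ) * EE Y) * ((c:ℝ) ^ (-(7/2) : ℝ) *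
          ((‖z‖)⁻¹)^2) := by ring
    _ ≤ ((Real.pi/4) ^ ((3/2) : ℝ) * EE Y) *
          ((Y^(-(2):ℝ) + Y^(-(1/2):ℝ) * (1 + X/Y)^((3/2):ℝ)) * (mA c * mB d)) :=
        mul_le_mul_of_nonneg_left hbase ht1
    _ ≤ ((Real.pi/4) ^ ((3/2) : ℝ) * EE Y + Y ^ ((1/2):ℝ) * EE' Y) *
          ((Y^(-(2):ℝ) + Y^(-(1/2):ℝ) * (1 + X/Y)^((3/2):ℝ)) * (mA c * mB d)) :=
        mul_le_mul_of_nonneg_right (le_add_of_nonneg_right ht2)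
          (mul_nonneg hBpos hmm)
    _ = CC Y X * (mA c * mB d) := by rw [CC]; ring

lemma Splus_norm_le (n h : ℕ) {c d : ℤ} (hc : 0 < c) {τ : ℂ} {Y X : ℝ} (hY : 0 < Y)
    (hX : 0 ≤ X) (him : Y ≤ τ.im) (hτ : ‖τ‖ ≤ X) :
    ‖Splus n h c d τ‖ ≤ CC Y X * (mA c * mB d) := by
  have hc0 : (0:ℝ) < (c:ℝ) := by exact_mod_cast hc
  set z : ℂ := τ + (d:ℂ)/(c:ℂ) with hzdef
  have hdc : ((d:ℂ)/(c:ℂ)) = (((d:ℝ)/(c:ℝ) : ℝ) : ℂ) := by push_cast; rfl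
  have hzim : z.im = τ.im := by
    rw [hzdef, Complex.add_im, hdc, Complex.ofReal_im, add_zero]
  have hRz : Y ≤ ‖z‖ := by
    calc Y ≤ τ.im := him
      _ = z.im := hzim.symm
      _ ≤ |z.im| := le_abs_self _
      _ ≤ ‖z‖ := Complex.abs_im_le_norm z
  have hRz0 : (0:ℝ) < ‖z‖ := lt_of_lt_of_le hY hRz
  have habs_dc : ‖(d:ℂ)/(c:ℂ)‖ = |(d:ℝ)| / (c:ℝ) := by
    rw [norm_div, Complex.norm_intCast, Complex.norm_intCast, abs_of_pos hc0]
  have hd : |(d:ℝ)| / (c:ℝ) ≤ ‖z‖ + X := by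
    have hzt : ((d:ℂ)/(c:ℂ)) = z - τ := by rw [hzdef]; ring
    rw [← habs_dc, hzt]
    calc ‖z - τ‖ ≤ ‖z‖ + ‖τ‖ := by
          exact norm_sub_le z τ
      _ ≤ ‖z‖ + X := by
          have : ‖τ‖ ≤ X := hτ
          linarith
  have hbase := base_bound hc hY hX hRz hd
  rw [Splus, norm_mul, norm_mul, norm_inv, norm_psi n h _ _ _ hc, inv_one]
  rw [norm_ee_of_im_eq_zero (z := ((ab c d).1 : ℂ) / (8 * (c : ℂ)))
    (by rw [show ((ab c d).1 : ℂ) / (8 * (c : ℂ))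
          = (((((ab c d).1 : ℝ) / (8 * (c:ℝ))) : ℝ) : ℂ) by push_cast; ring]
        exact Complex.ofReal_im _), one_mul, one_mul]
  have hb : ∀ m : ℕ,
      ‖(c : ℂ) ^ (-2 * ((m : ℂ) + 1) - 3/2) *
        (τ + (d : ℂ) / (c : ℂ)) ^ (-((m : ℂ) + 1) - 3/2) *
        (-(2 * (Real.pi:ℂ) * Complex.I) / 8) ^ (m + 1) / ((m + 1).factorial : ℂ)‖
      ≤ (((c:ℝ) ^ (-(7/2) : ℝ) * ((‖z‖)⁻¹)^2 * Y ^ ((1/2) : ℝ))) *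
        ((Real.pi/(4*Y))^(m+1) / (m + 1).factorial) :=
    fun m => Sterm_norm_le hc hY hRz m
  have hsum_maj : Summable (fun m : ℕ =>
      (((c:ℝ) ^ (-(7/2) : ℝ) * ((‖z‖)⁻¹)^2 * Y ^ ((1/2) : ℝ))) *
        ((Real.pi/(4*Y))^(m+1) / (m + 1).factorial)) := (summable_EE' Y).mul_left _
  have hnorm : Summable (fun m : ℕ =>
      ‖(c : ℂ) ^ (-2 * ((m : ℂ) + 1) - 3/2) *
        (τ + (d : ℂ) / (c : ℂ)) ^ (-((m : ℂ) + 1) - 3/2) *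
        (-(2 * (Real.pi:ℂ) * Complex.I) / 8) ^ (m + 1) / ((m + 1).factorial : ℂ)‖) :=
    Summable.of_nonneg_of_le (fun m => norm_nonneg _) hb hsum_maj
  have ht1 : (0:ℝ) ≤ (Real.pi/4) ^ ((3/2) : ℝ) * EE Y := by
    have := EE_nonneg hY; positivity
  have ht2 : (0:ℝ) ≤ Y ^ ((1/2):ℝ) * EE' Y := by
    have := EE'_nonneg hY; positivity
  have hmm : (0:ℝ) ≤ mA c * mB d := mul_nonneg (mA_nonneg _) (mB_nonneg _)
  have hBpos : (0:ℝ) ≤ Y^(-(2):ℝ) + Y^(-(1/2):ℝ) * (1 + X/Y)^((3/2):ℝ) := by positivity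
  calc ‖∑' m : ℕ, (c : ℂ) ^ (-2 * ((m : ℂ) + 1) - 3/2) *
          (τ + (d : ℂ) / (c : ℂ)) ^ (-((m : ℂ) + 1) - 3/2) *
          (-(2 * (Real.pi:ℂ) * Complex.I) / 8) ^ (m + 1) / ((m + 1).factorial : ℂ)‖
      ≤ ∑' m : ℕ, ‖(c : ℂ) ^ (-2 * ((m : ℂ) + 1) - 3/2) *
          (τ + (d : ℂ) / (c : ℂ)) ^ (-((m : ℂ) + 1) - 3/2) *
          (-(2 * (Real.pi:ℂ) * Complex.I) / 8) ^ (m + 1) / ((m + 1).factorial : ℂ)‖ :=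
        norm_tsum_le_tsum_norm hnorm
    _ ≤ ∑' m : ℕ, (((c:ℝ) ^ (-(7/2) : ℝ) * ((‖z‖)⁻¹)^2 * Y ^ ((1/2) : ℝ))) *
          ((Real.pi/(4*Y))^(m+1) / (m + 1).factorial) := Summable.tsum_le_tsum hb hnorm hsum_maj
    _ = (((c:ℝ) ^ (-(7/2) : ℝ) * ((‖z‖)⁻¹)^2 * Y ^ ((1/2) : ℝ))) * EE' Y :=
        tsum_mul_left
    _ = (Y ^ ((1/2):ℝ) * EE' Y) * ((c:ℝ) ^ (-(7/2) : ℝ) * ((‖z‖)⁻¹)^2) := by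
        ring
    _ ≤ (Y ^ ((1/2):ℝ) * EE' Y) *
          ((Y^(-(2):ℝ) + Y^(-(1/2):ℝ) * (1 + X/Y)^((3/2):ℝ)) * (mA c * mB d)) :=
        mul_le_mul_of_nonneg_left hbase ht2
    _ ≤ ((Real.pi/4) ^ ((3/2) : ℝ) * EE Y + Y ^ ((1/2):ℝ) * EE' Y) *
          ((Y^(-(2):ℝ) + Y^(-(1/2):ℝ) * (1 + X/Y)^((3/2):ℝ)) * (mA c * mB d)) :=
        mul_le_mul_of_nonneg_right (le_add_of_nonneg_left ht1)
          (mul_nonneg hBpos hmm)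
    _ = CC Y X * (mA c * mB d) := by rw [CC]; ring

lemma RplusAbs_nonneg (n h : ℕ) (p : ℤ × ℤ) (τ : ℂ) : 0 ≤ RplusAbs n h p τ := by
  rw [RplusAbs]; split
  · exact norm_nonneg _
  · exact le_rfl

lemma SplusAbs_nonneg (n h : ℕ) (p : ℤ × ℤ) (τ : ℂ) : 0 ≤ SplusAbs n h p τ := by
  rw [SplusAbs]; split
  · exact norm_nonneg _
  · exact le_rfl

lemma RplusAbs_le (n h : ℕ) {τ : ℂ} {Y X : ℝ} (hY : 0 < Y) (hX : 0 ≤ X)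
    (him : Y ≤ τ.im) (hτ : ‖τ‖ ≤ X) (p : ℤ × ℤ) :
    RplusAbs n h p τ ≤ CC Y X * (mA p.1 * mB p.2) := by
  rw [RplusAbs]; split
  · next hcond => exact Rplus_norm_le n h hcond.1 hY hX him hτ
  · exact mul_nonneg (CC_nonneg hY hX) (mul_nonneg (mA_nonneg _) (mB_nonneg _))

lemma SplusAbs_le (n h : ℕ) {τ : ℂ} {Y X : ℝ} (hY : 0 < Y) (hX : 0 ≤ X)
    (him : Y ≤ τ.im) (hτ : ‖τ‖ ≤ X) (p : ℤ × ℤ) :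
    SplusAbs n h p τ ≤ CC Y X * (mA p.1 * mB p.2) := by
  rw [SplusAbs]; split
  · next hcond => exact Splus_norm_le n h hcond.1 hY hX him hτ
  · exact mul_nonneg (CC_nonneg hY hX) (mul_nonneg (mA_nonneg _) (mB_nonneg _))

lemma summable_majorant (Y X : ℝ) :
    Summable (fun p : ℤ × ℤ => CC Y X * (mA p.1 * mB p.2)) :=
  (summable_mA.mul_of_nonneg summable_mB mA_nonneg mB_nonneg).mul_left _

lemma isOpen_HH : IsOpen HH :=
  isOpen_Ioi.preimage Complex.continuous_im


/-- The sums `Σ_{(c,d)} |R⁺_{c,d}(τ)|` and `Σ_{(c,d)} |S⁺_{c,d}(τ)|`, over all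
pairs `(c,d)` with `c > 0`, `n | c`, `gcd(c,d) = 1`, converge, locally uniformly on `ℍ`. -/
theorem Rplus_Splus_abs_convergence (n h : ℕ) (hn : 0 < n) (hh : 0 < h)
    (hhn : h ∣ n) (hh24 : h ∣ 24) :
    (∀ τ ∈ HH, Summable (fun p : ℤ × ℤ => RplusAbs n h p τ)) ∧
    (∀ τ ∈ HH, Summable (fun p : ℤ × ℤ => SplusAbs n h p τ)) ∧
    TendstoLocallyUniformlyOn
      (fun s : Finset (ℤ × ℤ) => fun τ => ∑ p ∈ s, RplusAbs n h p τ)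
      (fun τ => ∑' p : ℤ × ℤ, RplusAbs n h p τ) atTop HH ∧
    TendstoLocallyUniformlyOn
      (fun s : Finset (ℤ × ℤ) => fun τ => ∑ p ∈ s, SplusAbs n h p τ)
      (fun τ => ∑' p : ℤ × ℤ, SplusAbs n h p τ) atTop HH := by
  constructor
  · intro τ hτ
    exact Summable.of_nonneg_of_le (fun p => RplusAbs_nonneg n h p τ)
      (RplusAbs_le n h hτ (norm_nonneg τ) le_rfl le_rfl)
      (summable_majorant τ.im ‖τ‖)
  constructor
  · intro τ hτ
    exact Summable.of_nonneg_of_le (fun p => SplusAbs_nonneg n h p τ)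
      (SplusAbs_le n h hτ (norm_nonneg τ) le_rfl le_rfl)
      (summable_majorant τ.im ‖τ‖)
  constructor
  · rw [tendstoLocallyUniformlyOn_iff_forall_isCompact isOpen_HH]
    intro K hK hKc
    rcases K.eq_empty_or_nonempty with rfl | hne
    · intro u hu
      simp
    · obtain ⟨τ₁, hτ₁, hmin⟩ := hKc.exists_isMinOn hne Complex.continuous_im.continuousOn
      obtain ⟨τ₂, hτ₂, hmax⟩ := hKc.exists_isMaxOn hne continuous_norm.continuousOn
      have hY : 0 < τ₁.im := hK hτ₁
      apply tendstoUniformlyOn_tsum (summable_majorant τ₁.im ‖τ₂‖)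
      intro p τ hτK
      rw [Real.norm_of_nonneg (RplusAbs_nonneg n h p τ)]
      exact RplusAbs_le n h hY (norm_nonneg τ₂) (isMinOn_iff.mp hmin τ hτK)
        (isMaxOn_iff.mp hmax τ hτK) p
  · rw [tendstoLocallyUniformlyOn_iff_forall_isCompact isOpen_HH]
    intro K hK hKc
    rcases K.eq_empty_or_nonempty with rfl | hne
    · intro u hu
      simp
    · obtain ⟨τ₁, hτ₁, hmin⟩ := hKc.exists_isMinOn hne Complex.continuous_im.continuousOn
      obtain ⟨τ₂, hτ₂, hmax⟩ := hKc.exists_isMaxOn hne continuous_norm.continuousOn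
      have hY : 0 < τ₁.im := hK hτ₁
      apply tendstoUniformlyOn_tsum (summable_majorant τ₁.im ‖τ₂‖)
      intro p τ hτK
      rw [Real.norm_of_nonneg (SplusAbs_nonneg n h p τ)]
      exact SplusAbs_le n h hY (norm_nonneg τ₂) (isMinOn_iff.mp hmin τ hτK)
        (isMaxOn_iff.mp hmax τ hτK) p

end Rademacher
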